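/- Suppose u*, v* ∈ B_r(0) ⊂ ℝⁿ are connected by shock curves: v* = S_n(q*_n) ∘ ⋯ ∘ S_1(q*_1)[u*] with all q*_i in a small neighborhood of 0, and b₁ : B_r(0) → ℝ^{n−m} is C¹ with det[Db₁(u)·r_{m+1}(u), …, Db₁(u)·r_n(u)] ≠ 0 on B_r(0). Then there exists C > 0 such that Σ_{j=m+1}^n |q*_j| ≤ C·( Σ_{i=1}^m |q*_i| + |b₁(u*) − b₁(v*)| ). -/

import Mathlib

open Metric

noncomputable section

def Wrec {n : ℕ} (S : Fin n → ℝ → EuclideanSpace ℝ (Fin n) → EuclideanSpace ℝ (Fin n)) :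
    ℕ → (Fin n → ℝ) × EuclideanSpace ℝ (Fin n) → EuclideanSpace ℝ (Fin n)
  | 0 => fun p => p.2
  | (k+1) => fun p => if h : k < n then S ⟨k, h⟩ (p.1 ⟨k, h⟩) (Wrec S k p) else Wrec S k p

lemma Wrec_zero {n : ℕ} {S : Fin n → ℝ → EuclideanSpace ℝ (Fin n) → EuclideanSpace ℝ (Fin n)}
    (hS0 : ∀ i u, S i 0 u = u) (k : ℕ) (u : EuclideanSpace ℝ (Fin n)) :
    Wrec S k (0, u) = u := by
  induction k with
  | zero => rfl
  | succ k ih =>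
    simp only [Wrec]
    split
    · show S _ ((0 : Fin n → ℝ) _) _ = u
      rw [ih]; exact hS0 _ _
    · exact ih

lemma Wrec_contDiff {n : ℕ} {S : Fin n → ℝ → EuclideanSpace ℝ (Fin n) → EuclideanSpace ℝ (Fin n)}
    (hS : ∀ i, ContDiff ℝ 2 (fun p : ℝ × EuclideanSpace ℝ (Fin n) => S i p.1 p.2)) (k : ℕ) :
    ContDiff ℝ 1 (Wrec S k) := by
  induction k with
  | zero => exact contDiff_snd
  | succ k ih =>
    simp only [Wrec]
    split
    · exact ((hS _).of_le one_le_two).comp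
        (((contDiff_apply ℝ ℝ _).comp contDiff_fst).prodMk ih)
    · exact ih

lemma S_hasFDerivAt {n : ℕ} {S : Fin n → ℝ → EuclideanSpace ℝ (Fin n) → EuclideanSpace ℝ (Fin n)}
    {rvec : Fin n → EuclideanSpace ℝ (Fin n) → EuclideanSpace ℝ (Fin n)}
    (hS : ∀ i, ContDiff ℝ 2 (fun p : ℝ × EuclideanSpace ℝ (Fin n) => S i p.1 p.2))
    (hS0 : ∀ i u, S i 0 u = u)
    (hSderiv : ∀ i u, HasDerivAt (fun σ => S i σ u) (rvec i u) 0)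
    (i : Fin n) (u₀ : EuclideanSpace ℝ (Fin n)) :
    HasFDerivAt (fun p : ℝ × EuclideanSpace ℝ (Fin n) => S i p.1 p.2)
      ((ContinuousLinearMap.fst ℝ ℝ (EuclideanSpace ℝ (Fin n))).smulRight (rvec i u₀) +
        ContinuousLinearMap.snd ℝ ℝ (EuclideanSpace ℝ (Fin n))) (0, u₀) := by
  have hGd : DifferentiableAt ℝ (fun p : ℝ × EuclideanSpace ℝ (Fin n) => S i p.1 p.2) (0, u₀) :=
    (((hS i).of_le one_le_two).differentiable one_ne_zero).differentiableAt
  have hD : HasFDerivAt (fun p : ℝ × EuclideanSpace ℝ (Fin n) => S i p.1 p.2)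
      (fderiv ℝ (fun p : ℝ × EuclideanSpace ℝ (Fin n) => S i p.1 p.2) (0, u₀)) (0, u₀) :=
    hGd.hasFDerivAt
  set D := fderiv ℝ (fun p : ℝ × EuclideanSpace ℝ (Fin n) => S i p.1 p.2) (0, u₀) with hDdef
  have hφ1 : HasFDerivAt (fun σ : ℝ => (σ, u₀))
      ((ContinuousLinearMap.id ℝ ℝ).prod (0 : ℝ →L[ℝ] EuclideanSpace ℝ (Fin n))) 0 :=
    (hasFDerivAt_id (0 : ℝ)).prodMk (hasFDerivAt_const u₀ 0)
  have h1 : HasDerivAt (fun σ : ℝ => S i σ u₀) (D (1, 0)) 0 := by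
    have := (hD.comp 0 hφ1).hasDerivAt
    simpa [Function.comp_def] using this
  have hD1 : D (1, 0) = rvec i u₀ := h1.unique (hSderiv i u₀)
  have hφ2 : HasFDerivAt (fun u : EuclideanSpace ℝ (Fin n) => ((0 : ℝ), u))
      (ContinuousLinearMap.inr ℝ ℝ (EuclideanSpace ℝ (Fin n))) u₀ :=
    (ContinuousLinearMap.inr ℝ ℝ (EuclideanSpace ℝ (Fin n))).hasFDerivAt
  have h2 : HasFDerivAt (fun u : EuclideanSpace ℝ (Fin n) => S i 0 u)
      (D.comp (ContinuousLinearMap.inr ℝ ℝ (EuclideanSpace ℝ (Fin n)))) u₀ :=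
    hD.comp u₀ hφ2
  have h2' : HasFDerivAt (fun u : EuclideanSpace ℝ (Fin n) => S i 0 u)
      (ContinuousLinearMap.id ℝ (EuclideanSpace ℝ (Fin n))) u₀ := by
    have heq : (fun u : EuclideanSpace ℝ (Fin n) => S i 0 u) = id := funext fun u => hS0 i u
    rw [heq]; exact hasFDerivAt_id u₀
  have hD2 : D.comp (ContinuousLinearMap.inr ℝ ℝ (EuclideanSpace ℝ (Fin n))) =
      ContinuousLinearMap.id ℝ (EuclideanSpace ℝ (Fin n)) := h2.unique h2'
  have key : D = (ContinuousLinearMap.fst ℝ ℝ (EuclideanSpace ℝ (Fin n))).smulRight (rvec i u₀) +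
      ContinuousLinearMap.snd ℝ ℝ (EuclideanSpace ℝ (Fin n)) := by
    apply ContinuousLinearMap.ext
    intro p
    have hp : p = (p.1 • ((1 : ℝ), (0 : EuclideanSpace ℝ (Fin n)))) + ((0 : ℝ), p.2) := by
      simp [Prod.ext_iff]
    have hD2' : D (0, p.2) = p.2 := by
      have := ContinuousLinearMap.ext_iff.mp hD2 p.2
      simpa using this
    calc D p = D ((p.1 • ((1:ℝ), (0 : EuclideanSpace ℝ (Fin n)))) + ((0:ℝ), p.2)) := by rw [← hp]
      _ = p.1 • D (1, 0) + D (0, p.2) := by rw [map_add, map_smul]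
      _ = p.1 • rvec i u₀ + p.2 := by rw [hD1, hD2']
      _ = _ := by simp
  rw [← key]; exact hD

lemma Wrec_hasFDerivAt {n : ℕ}
    {S : Fin n → ℝ → EuclideanSpace ℝ (Fin n) → EuclideanSpace ℝ (Fin n)}
    {rvec : Fin n → EuclideanSpace ℝ (Fin n) → EuclideanSpace ℝ (Fin n)}
    (hS : ∀ i, ContDiff ℝ 2 (fun p : ℝ × EuclideanSpace ℝ (Fin n) => S i p.1 p.2))
    (hS0 : ∀ i u, S i 0 u = u)
    (hSderiv : ∀ i u, HasDerivAt (fun σ => S i σ u) (rvec i u) 0)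
    (u₀ : EuclideanSpace ℝ (Fin n)) (k : ℕ) :
    ∃ L : ((Fin n → ℝ) × EuclideanSpace ℝ (Fin n)) →L[ℝ] EuclideanSpace ℝ (Fin n),
      HasFDerivAt (Wrec S k) L (0, u₀) ∧
      ∀ x : (Fin n → ℝ) × EuclideanSpace ℝ (Fin n),
        L x = x.2 + ∑ j ∈ Finset.univ.filter (fun j : Fin n => (j : ℕ) < k),
          x.1 j • rvec j u₀ := by
  induction k with
  | zero =>
    refine ⟨ContinuousLinearMap.snd ℝ (Fin n → ℝ) (EuclideanSpace ℝ (Fin n)), ?_, ?_⟩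
    · have hfun : Wrec S 0 = fun p : (Fin n → ℝ) × EuclideanSpace ℝ (Fin n) => p.2 := rfl
      rw [hfun]
      exact (ContinuousLinearMap.snd ℝ (Fin n → ℝ) (EuclideanSpace ℝ (Fin n))).hasFDerivAt
    · intro x; simp
  | succ k ih =>
    obtain ⟨L, hL, hLval⟩ := ih
    by_cases h : k < n
    · have hfun : Wrec S (k+1) = fun p => S ⟨k, h⟩ (p.1 ⟨k, h⟩) (Wrec S k p) := by
        funext p; simp [Wrec, h]
      set A := (ContinuousLinearMap.proj (⟨k, h⟩ : Fin n)).comp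
        (ContinuousLinearMap.fst ℝ (Fin n → ℝ) (EuclideanSpace ℝ (Fin n))) with hA
      have hφ : HasFDerivAt (fun p : (Fin n → ℝ) × EuclideanSpace ℝ (Fin n) =>
          (p.1 ⟨k, h⟩, Wrec S k p)) (A.prod L) (0, u₀) := by
        have hA1 : HasFDerivAt (fun p : (Fin n → ℝ) × EuclideanSpace ℝ (Fin n) =>
            p.1 ⟨k, h⟩) A (0, u₀) := A.hasFDerivAt
        exact hA1.prodMk hL
      have hpt : (fun p : (Fin n → ℝ) × EuclideanSpace ℝ (Fin n) =>
          (p.1 ⟨k, h⟩, Wrec S k p)) (0, u₀) = ((0 : ℝ), u₀) := by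
        simp [Wrec_zero hS0]
      have hScomp := (S_hasFDerivAt hS hS0 hSderiv ⟨k, h⟩ u₀)
      rw [← hpt] at hScomp
      have hcomp := hScomp.comp (0, u₀) hφ
      refine ⟨_, by rw [hfun]; exact hcomp, ?_⟩
      intro x
      have hins : Finset.univ.filter (fun j : Fin n => (j : ℕ) < k + 1) =
          insert (⟨k, h⟩ : Fin n) (Finset.univ.filter (fun j : Fin n => (j : ℕ) < k)) := by
        ext j
        simp only [Finset.mem_filter, Finset.mem_univ, true_and, Finset.mem_insert, Fin.ext_iff]
        omega
      have hnotmem : (⟨k, h⟩ : Fin n) ∉ Finset.univ.filter (fun j : Fin n => (j : ℕ) < k) := by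
        simp
      rw [hins, Finset.sum_insert hnotmem]
      simp only [ContinuousLinearMap.coe_comp', Function.comp_apply,
        ContinuousLinearMap.prod_apply, ContinuousLinearMap.add_apply,
        ContinuousLinearMap.smulRight_apply, ContinuousLinearMap.coe_fst',
        ContinuousLinearMap.coe_snd', hA, ContinuousLinearMap.proj_apply]
      rw [hLval x]
      abel
    · have hfun : Wrec S (k+1) = Wrec S k := by
        funext p; simp [Wrec, h]
      refine ⟨L, by rw [hfun]; exact hL, ?_⟩
      intro x
      rw [hLval x]
      congr 1
      apply Finset.sum_congr _ (fun _ _ => rfl)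
      ext j
      simp only [Finset.mem_filter, Finset.mem_univ, true_and]
      have := j.2
      omega

lemma sum_filter_ge_eq {n m : ℕ} (hm : m < n) {M : Type*} [AddCommMonoid M] (f : Fin n → M) :
    ∑ j ∈ Finset.univ.filter (fun j : Fin n => m ≤ (j : ℕ)), f j =
      ∑ j : Fin (n - m), f ⟨m + (j : ℕ), Nat.add_lt_of_lt_sub' j.2⟩ := by
  refine Finset.sum_nbij' (fun j => (⟨(j : ℕ) - m, by have := j.2; omega⟩ : Fin (n - m)))
    (fun j => (⟨m + (j : ℕ), Nat.add_lt_of_lt_sub' j.2⟩ : Fin n)) ?_ ?_ ?_ ?_ ?_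
  · intro a ha; simp
  · intro a ha; simp only [Finset.mem_filter, Finset.mem_univ, true_and]; simp
  · intro a ha
    simp only [Finset.mem_filter, Finset.mem_univ, true_and] at ha
    ext; simp; omega
  · intro a ha; ext; simp
  · intro a ha
    simp only [Finset.mem_filter, Finset.mem_univ, true_and] at ha
    congr 1; ext; simp; omega

/-- Boundary comparison lemma: if `v* = S_n(q*_n)∘⋯∘S_1(q*_1)[u*]` with all `q*_i` small,
and the boundary function `b₁` satisfies the nondegeneracy condition
`det[Db₁(u)·r_{m+1}(u),…,Db₁(u)·r_n(u)] ≠ 0`, then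
`Σ_{j>m} |q*_j| ≤ C(Σ_{i≤m} |q*_i| + |b₁(u*) − b₁(v*)|)`. -/
theorem stmt_15 (n m : ℕ) (hm : m < n) (r : ℝ) (hr : 0 < r)
    (S : Fin n → ℝ → EuclideanSpace ℝ (Fin n) → EuclideanSpace ℝ (Fin n))
    (rvec : Fin n → EuclideanSpace ℝ (Fin n) → EuclideanSpace ℝ (Fin n))
    (b₁ : EuclideanSpace ℝ (Fin n) → EuclideanSpace ℝ (Fin (n - m)))
    (hS : ∀ i, ContDiff ℝ 2 (fun p : ℝ × EuclideanSpace ℝ (Fin n) => S i p.1 p.2))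
    (hS0 : ∀ i u, S i 0 u = u)
    (hSderiv : ∀ i u, HasDerivAt (fun σ => S i σ u) (rvec i u) 0)
    (hb₁ : ContDiff ℝ 1 b₁)
    (hnd : ∀ u ∈ closedBall (0 : EuclideanSpace ℝ (Fin n)) r,
      Function.Bijective (fun c : Fin (n - m) → ℝ =>
        ∑ j : Fin (n - m), c j •
          fderiv ℝ b₁ u (rvec (⟨m + (j : ℕ), by have := j.2; omega⟩ : Fin n) u))) :
    ∃ C > (0 : ℝ), ∃ δ > (0 : ℝ),
      ∀ (ustar vstar : EuclideanSpace ℝ (Fin n)) (q : Fin n → ℝ) (w : ℕ → EuclideanSpace ℝ (Fin n)),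
        ustar ∈ closedBall (0 : EuclideanSpace ℝ (Fin n)) r →
        vstar ∈ closedBall (0 : EuclideanSpace ℝ (Fin n)) r →
        (∀ i, |q i| ≤ δ) →
        w 0 = ustar → w n = vstar →
        (∀ i : Fin n, w ((i : ℕ) + 1) = S i (q i) (w (i : ℕ))) →
        (∑ i ∈ Finset.univ.filter (fun i : Fin n => m ≤ (i : ℕ)), |q i|) ≤
          C * ((∑ i ∈ Finset.univ.filter (fun i : Fin n => (i : ℕ) < m), |q i|) +
            ‖b₁ ustar - b₁ vstar‖) := by
  by_contra hcon
  push_neg at hcon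
  have hdata : ∀ k : ℕ, ∃ ustar vstar : EuclideanSpace ℝ (Fin n), ∃ q : Fin n → ℝ,
      ∃ w : ℕ → EuclideanSpace ℝ (Fin n),
      ustar ∈ closedBall (0 : EuclideanSpace ℝ (Fin n)) r ∧
      vstar ∈ closedBall (0 : EuclideanSpace ℝ (Fin n)) r ∧
      (∀ i, |q i| ≤ 1 / (k + 1)) ∧
      w 0 = ustar ∧ w n = vstar ∧
      (∀ i : Fin n, w ((i : ℕ) + 1) = S i (q i) (w (i : ℕ))) ∧
      ((k : ℝ) + 1) * ((∑ i ∈ Finset.univ.filter (fun i : Fin n => (i : ℕ) < m), |q i|) +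
          ‖b₁ ustar - b₁ vstar‖) <
        (∑ i ∈ Finset.univ.filter (fun i : Fin n => m ≤ (i : ℕ)), |q i|) := by
    intro k
    obtain ⟨u, v, q, w, h1, h2, h3, h4, h5, h6, h7⟩ :=
      hcon ((k : ℝ) + 1) (by positivity) (1 / (k + 1)) (by positivity)
    exact ⟨u, v, q, w, h1, h2, h3, h4, h5, h6, h7⟩
  choose u v q w hu hv hq hw0 hwn hwS hlt using hdata
  -- `v k` is obtained from `u k` through the composite map
  have hvW : ∀ k, v k = Wrec S n (q k, u k) := by
    intro k
    have key : ∀ j : ℕ, j ≤ n → w k j = Wrec S j (q k, u k) := by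
      intro j
      induction j with
      | zero => intro _; exact hw0 k
      | succ j ih =>
        intro hj
        have hjn : j < n := by omega
        have := hwS k ⟨j, hjn⟩
        simp only [Fin.val_mk] at this
        rw [this, ih (le_of_lt hjn)]
        simp [Wrec, hjn]
    rw [← hwn k]; exact key n le_rfl
  set tt : ℕ → ℝ := fun k => ∑ i ∈ Finset.univ.filter (fun i : Fin n => m ≤ (i : ℕ)), |q k i|
    with htt
  set ss : ℕ → ℝ := fun k => ∑ i ∈ Finset.univ.filter (fun i : Fin n => (i : ℕ) < m), |q k i|
    with hss
  have hss0 : ∀ k, 0 ≤ ss k := fun k => Finset.sum_nonneg fun i _ => abs_nonneg _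
  have ht0 : ∀ k, 0 < tt k := by
    intro k
    calc (0:ℝ) ≤ ((k : ℝ) + 1) * (ss k + ‖b₁ (u k) - b₁ (v k)‖) := by positivity
    _ < tt k := hlt k
  have hsslt : ∀ k, ss k < tt k / ((k : ℝ) + 1) := by
    intro k
    rw [lt_div_iff₀ (by positivity)]
    calc ss k * ((k:ℝ)+1) = ((k:ℝ)+1) * ss k := by ring
    _ ≤ ((k:ℝ)+1) * (ss k + ‖b₁ (u k) - b₁ (v k)‖) := by
        apply mul_le_mul_of_nonneg_left _ (by positivity)
        simp [norm_nonneg]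
    _ < tt k := hlt k
  have hHlt : ∀ k, ‖b₁ (u k) - b₁ (v k)‖ < tt k / ((k : ℝ) + 1) := by
    intro k
    rw [lt_div_iff₀ (by positivity)]
    calc ‖b₁ (u k) - b₁ (v k)‖ * ((k:ℝ)+1) = ((k:ℝ)+1) * ‖b₁ (u k) - b₁ (v k)‖ := by ring
    _ ≤ ((k:ℝ)+1) * (ss k + ‖b₁ (u k) - b₁ (v k)‖) := by
        apply mul_le_mul_of_nonneg_left _ (by positivity)
        simp [hss0 k]
    _ < tt k := hlt k
  have habs : ∀ k (j : Fin n), |q k j| ≤ tt k := by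
    intro k j
    by_cases hj : m ≤ (j : ℕ)
    · exact Finset.single_le_sum (f := fun i => |q k i|) (fun i _ => abs_nonneg _)
        (by simp [hj])
    · have h1 : |q k j| ≤ ss k :=
        Finset.single_le_sum (f := fun i => |q k i|) (fun i _ => abs_nonneg _)
          (by simp [Nat.lt_of_not_le hj])
      refine h1.trans ((hsslt k).le.trans ?_)
      rw [div_le_iff₀ (by positivity)]
      nlinarith [ht0 k]
  -- the normalised jump vector
  set pp : ℕ → (Fin n → ℝ) := fun k j => q k j / tt k with hpp
  have hppabs : ∀ k j, |pp k j| ≤ 1 := by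
    intro k j
    rw [hpp]
    simp only
    rw [abs_div, abs_of_pos (ht0 k), div_le_one (ht0 k)]
    exact habs k j
  have hppmem : ∀ k, pp k ∈ closedBall (0 : Fin n → ℝ) 1 := by
    intro k
    rw [mem_closedBall, dist_zero_right]
    exact pi_norm_le_iff_of_nonneg (by norm_num) |>.mpr fun j => by
      rw [Real.norm_eq_abs]; exact hppabs k j
  -- compactness: extract a convergent subsequence
  have hcpt : IsCompact ((closedBall (0 : Fin n → ℝ) 1) ×ˢ
      (closedBall (0 : EuclideanSpace ℝ (Fin n)) r)) :=
    (isCompact_closedBall _ _).prod (isCompact_closedBall _ _)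
  obtain ⟨⟨e, u₀⟩, hmem, φ, hφmono, hφtend⟩ :=
    hcpt.tendsto_subseq (x := fun k => (pp k, u k)) (fun k => Set.mk_mem_prod (hppmem k) (hu k))
  have hptend : Filter.Tendsto (fun k => pp (φ k)) Filter.atTop (nhds e) := by
    have := (continuous_fst.tendsto ((e, u₀) : (Fin n → ℝ) × EuclideanSpace ℝ (Fin n))).comp hφtend
    simpa [Function.comp_def] using this
  have hutend : Filter.Tendsto (fun k => u (φ k)) Filter.atTop (nhds u₀) := by
    have := (continuous_snd.tendsto ((e, u₀) : (Fin n → ℝ) × EuclideanSpace ℝ (Fin n))).comp hφtend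
    simpa [Function.comp_def] using this
  have hu₀mem : u₀ ∈ closedBall (0 : EuclideanSpace ℝ (Fin n)) r := hmem.2
  have hφge : ∀ k : ℕ, (k : ℝ) + 1 ≤ (φ k : ℝ) + 1 := by
    intro k
    have h1 : k ≤ φ k := hφmono.le_apply
    have : (k : ℝ) ≤ (φ k : ℝ) := by exact_mod_cast h1
    linarith
  have hone : Filter.Tendsto (fun k : ℕ => 1 / ((k : ℝ) + 1)) Filter.atTop (nhds 0) :=
    tendsto_one_div_add_atTop_nhds_zero_nat
  -- q (φ k) tends to 0
  have hqtend : Filter.Tendsto (fun k => q (φ k)) Filter.atTop (nhds (0 : Fin n → ℝ)) := by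
    refine squeeze_zero_norm (a := fun k : ℕ => 1 / ((k : ℝ) + 1)) (fun k => ?_) hone
    refine (pi_norm_le_iff_of_nonneg (by positivity)).mpr fun j => ?_
    rw [Real.norm_eq_abs]
    refine (hq (φ k) j).trans ?_
    apply one_div_le_one_div_of_le (by positivity) (hφge k)
  -- the composite map and its strict derivative at (0, u₀)
  obtain ⟨L, hLder, hLval⟩ := Wrec_hasFDerivAt hS hS0 hSderiv u₀ n
  have hb₁der : HasFDerivAt b₁ (fderiv ℝ b₁ u₀) (Wrec S n (0, u₀)) := by
    rw [Wrec_zero hS0]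
    exact ((hb₁.differentiable one_ne_zero) u₀).hasFDerivAt
  set Db := fderiv ℝ b₁ u₀ with hDb
  have hF : HasFDerivAt (fun x : (Fin n → ℝ) × EuclideanSpace ℝ (Fin n) => b₁ (Wrec S n x))
      (Db.comp L) (0, u₀) := hb₁der.comp (0, u₀) hLder
  have hFs : HasStrictFDerivAt
      (fun x : (Fin n → ℝ) × EuclideanSpace ℝ (Fin n) => b₁ (Wrec S n x))
      (Db.comp L) (0, u₀) := by
    refine ContDiffAt.hasStrictFDerivAt' ?_ hF one_ne_zero
    exact (hb₁.comp (Wrec_contDiff hS n)).contDiffAt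
  have hlo := hFs.isLittleO
  -- evaluate the little-o along the subsequence
  have hytend : Filter.Tendsto
      (fun k => (((q (φ k), u (φ k)) : (Fin n → ℝ) × EuclideanSpace ℝ (Fin n)),
        (((0 : Fin n → ℝ), u (φ k)) : (Fin n → ℝ) × EuclideanSpace ℝ (Fin n))))
      Filter.atTop (nhds (((0 : Fin n → ℝ), u₀), ((0 : Fin n → ℝ), u₀))) :=
    Filter.Tendsto.prodMk_nhds (hqtend.prodMk_nhds hutend)
      (tendsto_const_nhds.prodMk_nhds hutend)
  have hlo2 := hlo.comp_tendsto hytend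
  -- identify the functions appearing in the little-o
  have hfun1 : (fun k => (fun x : (Fin n → ℝ) × EuclideanSpace ℝ (Fin n) => b₁ (Wrec S n x))
        ((q (φ k), u (φ k)), ((0 : Fin n → ℝ), u (φ k))).1 -
      (fun x : (Fin n → ℝ) × EuclideanSpace ℝ (Fin n) => b₁ (Wrec S n x))
        ((q (φ k), u (φ k)), ((0 : Fin n → ℝ), u (φ k))).2 -
      (Db.comp L) (((q (φ k), u (φ k)), ((0 : Fin n → ℝ), u (φ k))).1 -
        ((q (φ k), u (φ k)), ((0 : Fin n → ℝ), u (φ k))).2)) =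
      (fun k => b₁ (v (φ k)) - b₁ (u (φ k)) -
        ∑ j : Fin n, q (φ k) j • Db (rvec j u₀)) := by
    funext k
    have h1 : ((q (φ k), u (φ k)) : (Fin n → ℝ) × EuclideanSpace ℝ (Fin n)) -
        ((0 : Fin n → ℝ), u (φ k)) = (q (φ k), (0 : EuclideanSpace ℝ (Fin n))) := by
      simp [Prod.ext_iff]
    simp only [h1]
    rw [← hvW (φ k), Wrec_zero hS0]
    congr 1
    rw [ContinuousLinearMap.comp_apply, hLval]
    have hfil : Finset.univ.filter (fun j : Fin n => (j : ℕ) < n) = Finset.univ :=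
      Finset.filter_true_of_mem fun j _ => j.2
    simp only [hfil]
    rw [zero_add, map_sum]
    exact Finset.sum_congr rfl fun j _ => by rw [map_smul]
  have hfun2 : ((fun P : ((Fin n → ℝ) × EuclideanSpace ℝ (Fin n)) ×
        ((Fin n → ℝ) × EuclideanSpace ℝ (Fin n)) => P.1 - P.2) ∘
      (fun k => (((q (φ k), u (φ k)) : (Fin n → ℝ) × EuclideanSpace ℝ (Fin n)),
        (((0 : Fin n → ℝ), u (φ k)) : (Fin n → ℝ) × EuclideanSpace ℝ (Fin n))))) =
      fun k => ((q (φ k), (0 : EuclideanSpace ℝ (Fin n))) :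
        (Fin n → ℝ) × EuclideanSpace ℝ (Fin n)) := by
    funext k
    simp [Prod.ext_iff]
  set g : ℕ → EuclideanSpace ℝ (Fin (n - m)) := fun k =>
    b₁ (v (φ k)) - b₁ (u (φ k)) - ∑ j : Fin n, q (φ k) j • Db (rvec j u₀) with hg
  have hlo3 : g =o[Filter.atTop]
      (fun k => ((q (φ k), (0 : EuclideanSpace ℝ (Fin n))) :
        (Fin n → ℝ) × EuclideanSpace ℝ (Fin n))) := by
    have := hlo2
    rw [show ((fun p : ((Fin n → ℝ) × EuclideanSpace ℝ (Fin n)) ×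
          ((Fin n → ℝ) × EuclideanSpace ℝ (Fin n)) =>
          b₁ (Wrec S n p.1) - b₁ (Wrec S n p.2) - (Db.comp L) (p.1 - p.2)) ∘
        (fun k => (((q (φ k), u (φ k)) : (Fin n → ℝ) × EuclideanSpace ℝ (Fin n)),
          (((0 : Fin n → ℝ), u (φ k)) : (Fin n → ℝ) × EuclideanSpace ℝ (Fin n))))) = g
      from hfun1, hfun2] at this
    exact this
  have hlo4 : g =o[Filter.atTop] (fun k => tt (φ k)) := by
    refine hlo3.trans_isBigO (Asymptotics.isBigO_of_le _ fun k => ?_)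
    rw [Prod.norm_def]
    simp only [norm_zero]
    rw [max_eq_left (norm_nonneg _), Real.norm_eq_abs, abs_of_pos (ht0 (φ k))]
    refine (pi_norm_le_iff_of_nonneg (le_of_lt (ht0 (φ k)))).mpr fun j => ?_
    rw [Real.norm_eq_abs]
    exact habs (φ k) j
  -- dividing by tt (φ k): the rescaled error tends to 0
  have key0 : Filter.Tendsto (fun k => (tt (φ k))⁻¹ • g k) Filter.atTop
      (nhds (0 : EuclideanSpace ℝ (Fin (n - m)))) := by
    rw [NormedAddCommGroup.tendsto_nhds_zero]
    intro ε hε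
    have := (Asymptotics.isLittleO_iff.mp hlo4) (c := ε / 2) (by positivity)
    filter_upwards [this] with k hk
    rw [norm_smul, Real.norm_eq_abs, abs_inv, abs_of_pos (ht0 (φ k))]
    rw [Real.norm_eq_abs, abs_of_pos (ht0 (φ k))] at hk
    calc (tt (φ k))⁻¹ * ‖g k‖ ≤ (tt (φ k))⁻¹ * (ε / 2 * tt (φ k)) := by
          apply mul_le_mul_of_nonneg_left hk (by positivity)
      _ = ε / 2 := by
          rw [mul_comm (ε / 2) (tt (φ k)), ← mul_assoc,
            inv_mul_cancel₀ (ne_of_gt (ht0 (φ k))), one_mul]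
      _ < ε := by linarith
  -- the rescaled boundary difference tends to 0
  have hB : Filter.Tendsto
      (fun k => (tt (φ k))⁻¹ • (b₁ (v (φ k)) - b₁ (u (φ k)))) Filter.atTop
      (nhds (0 : EuclideanSpace ℝ (Fin (n - m)))) := by
    refine squeeze_zero_norm (a := fun k : ℕ => 1 / ((k : ℝ) + 1)) (fun k => ?_) hone
    rw [norm_smul, Real.norm_eq_abs, abs_inv, abs_of_pos (ht0 (φ k)), norm_sub_rev]
    have h1 : ‖b₁ (u (φ k)) - b₁ (v (φ k))‖ < tt (φ k) / ((φ k : ℝ) + 1) := hHlt (φ k)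
    have h2 : tt (φ k) / ((φ k : ℝ) + 1) ≤ tt (φ k) / ((k : ℝ) + 1) :=
      div_le_div_of_nonneg_left (le_of_lt (ht0 (φ k))) (by positivity) (hφge k)
    calc (tt (φ k))⁻¹ * ‖b₁ (u (φ k)) - b₁ (v (φ k))‖
        ≤ (tt (φ k))⁻¹ * (tt (φ k) / ((k : ℝ) + 1)) := by
          apply mul_le_mul_of_nonneg_left (le_of_lt (lt_of_lt_of_le h1 h2)) (by positivity)
      _ = 1 / ((k : ℝ) + 1) := by
          rw [div_eq_mul_inv, ← mul_assoc, inv_mul_cancel₀ (ne_of_gt (ht0 (φ k))), one_mul,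
            one_div]
  -- the rescaled linear term tends to the limit sum
  have hSig : Filter.Tendsto (fun k => ∑ j : Fin n, pp (φ k) j • Db (rvec j u₀)) Filter.atTop
      (nhds (∑ j : Fin n, e j • Db (rvec j u₀))) := by
    refine tendsto_finset_sum _ fun j _ => ?_
    have hcoord : Filter.Tendsto (fun k => pp (φ k) j) Filter.atTop (nhds (e j)) :=
      ((continuous_apply j).tendsto e).comp hptend
    exact hcoord.smul_const _
  -- combining: the limit sum is 0
  have hsplit : ∀ k, ∑ j : Fin n, pp (φ k) j • Db (rvec j u₀) =
      (tt (φ k))⁻¹ • (b₁ (v (φ k)) - b₁ (u (φ k))) - (tt (φ k))⁻¹ • g k := by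
    intro k
    rw [hg]
    simp only
    rw [← smul_sub, sub_sub_cancel, Finset.smul_sum]
    refine Finset.sum_congr rfl fun j _ => ?_
    rw [hpp, smul_smul]
    simp only
    rw [div_eq_inv_mul]
  have hSig0 : Filter.Tendsto (fun k => ∑ j : Fin n, pp (φ k) j • Db (rvec j u₀)) Filter.atTop
      (nhds (0 : EuclideanSpace ℝ (Fin (n - m)))) := by
    have := hB.sub key0
    rw [sub_zero] at this
    exact this.congr fun k => (hsplit k).symm
  have heq0 : ∑ j : Fin n, e j • Db (rvec j u₀) = 0 := tendsto_nhds_unique hSig hSig0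
  -- the first m coordinates of e vanish
  have hezero : ∀ j : Fin n, (j : ℕ) < m → e j = 0 := by
    intro j hj
    have hcoord : Filter.Tendsto (fun k => pp (φ k) j) Filter.atTop (nhds (e j)) :=
      ((continuous_apply j).tendsto e).comp hptend
    have hbound : ∀ k : ℕ, ‖pp (φ k) j‖ ≤ 1 / ((k : ℝ) + 1) := by
      intro k
      rw [Real.norm_eq_abs, hpp]
      simp only
      rw [abs_div, abs_of_pos (ht0 (φ k)), div_le_iff₀ (ht0 (φ k))]
      have h1 : |q (φ k) j| ≤ ss (φ k) :=
        Finset.single_le_sum (f := fun i => |q (φ k) i|) (fun i _ => abs_nonneg _)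
          (by simp [hj])
      have h2 : ss (φ k) < tt (φ k) / ((φ k : ℝ) + 1) := hsslt (φ k)
      have h3 : tt (φ k) / ((φ k : ℝ) + 1) ≤ tt (φ k) / ((k : ℝ) + 1) :=
        div_le_div_of_nonneg_left (le_of_lt (ht0 (φ k))) (by positivity) (hφge k)
      calc |q (φ k) j| ≤ tt (φ k) / ((k : ℝ) + 1) := le_of_lt (lt_of_le_of_lt h1
            (lt_of_lt_of_le h2 h3))
        _ = 1 / ((k : ℝ) + 1) * tt (φ k) := by ring
    exact tendsto_nhds_unique hcoord (squeeze_zero_norm hbound hone)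
  -- the tail coordinates of e sum to 1 in absolute value
  have hsum1 : ∑ j ∈ Finset.univ.filter (fun j : Fin n => m ≤ (j : ℕ)), |e j| = 1 := by
    have hcont : Continuous (fun x : Fin n → ℝ =>
        ∑ j ∈ Finset.univ.filter (fun j : Fin n => m ≤ (j : ℕ)), |x j|) :=
      continuous_finset_sum _ fun j _ => (continuous_apply j).abs
    have h1 : Filter.Tendsto (fun k =>
        ∑ j ∈ Finset.univ.filter (fun j : Fin n => m ≤ (j : ℕ)), |pp (φ k) j|)
        Filter.atTop (nhds (∑ j ∈ Finset.univ.filter (fun j : Fin n => m ≤ (j : ℕ)), |e j|)) :=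
      (hcont.tendsto e).comp hptend
    have h2 : ∀ k : ℕ, ∑ j ∈ Finset.univ.filter (fun j : Fin n => m ≤ (j : ℕ)),
        |pp (φ k) j| = 1 := by
      intro k
      have : ∀ j ∈ Finset.univ.filter (fun j : Fin n => m ≤ (j : ℕ)),
          |pp (φ k) j| = |q (φ k) j| / tt (φ k) := by
        intro j _
        rw [hpp]; simp only
        rw [abs_div, abs_of_pos (ht0 (φ k))]
      rw [Finset.sum_congr rfl this, ← Finset.sum_div]
      exact div_self (ne_of_gt (ht0 (φ k)))
    rw [Filter.tendsto_congr h2] at h1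
    exact tendsto_nhds_unique h1 tendsto_const_nhds
  -- use injectivity of the nondegeneracy map at u₀
  have hinj := (hnd u₀ hu₀mem).injective
  set c : Fin (n - m) → ℝ := fun j => e ⟨m + (j : ℕ), by have := j.2; omega⟩ with hcdef
  have hcsum : ∑ j : Fin (n - m), c j • fderiv ℝ b₁ u₀
      (rvec (⟨m + (j : ℕ), by have := j.2; omega⟩ : Fin n) u₀) = 0 := by
    have hsplitsum : ∑ j ∈ Finset.univ.filter (fun j : Fin n => (j : ℕ) < m),
        e j • Db (rvec j u₀) +
        ∑ j ∈ Finset.univ.filter (fun j : Fin n => ¬ ((j : ℕ) < m)), e j • Db (rvec j u₀) =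
        ∑ j : Fin n, e j • Db (rvec j u₀) :=
      Finset.sum_filter_add_sum_filter_not _ _ _
    have hz : ∑ j ∈ Finset.univ.filter (fun j : Fin n => (j : ℕ) < m),
        e j • Db (rvec j u₀) = 0 := by
      refine Finset.sum_eq_zero fun j hjj => ?_
      simp only [Finset.mem_filter, Finset.mem_univ, true_and] at hjj
      rw [hezero j hjj, zero_smul]
    have hfiltereq : Finset.univ.filter (fun j : Fin n => ¬ ((j : ℕ) < m)) =
        Finset.univ.filter (fun j : Fin n => m ≤ (j : ℕ)) := by
      apply Finset.filter_congr; intro j _; simp [Nat.not_lt]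
    have htail : ∑ j ∈ Finset.univ.filter (fun j : Fin n => m ≤ (j : ℕ)),
        e j • Db (rvec j u₀) = 0 := by
      have := hsplitsum
      rw [hz, zero_add, hfiltereq] at this
      rw [this, heq0]
    have hre := sum_filter_ge_eq hm (fun j : Fin n => e j • Db (rvec j u₀))
    rw [htail] at hre
    exact hre.symm
  have hczero : c = 0 := by
    apply hinj
    beta_reduce
    rw [hcsum]
    exact (Finset.sum_eq_zero fun j _ => by simp).symm
  -- contradiction with hsum1
  have : ∑ j ∈ Finset.univ.filter (fun j : Fin n => m ≤ (j : ℕ)), |e j| = 0 := by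
    refine Finset.sum_eq_zero fun j hjj => ?_
    simp only [Finset.mem_filter, Finset.mem_univ, true_and] at hjj
    have hj2 : j = (⟨m + ((j : ℕ) - m), by have := j.2; omega⟩ : Fin n) := by
      ext; simp; omega
    have : e j = c ⟨(j : ℕ) - m, by have := j.2; omega⟩ := by
      rw [hcdef]; simp only; congr 1
    rw [this, hczero]
    simp
  rw [hsum1] at this
  norm_num at this
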